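/- arXiv:2510.16337 — 2 statements merged into one kernel-verified Lean document; each statement's English description precedes it below -/
import Mathlib

section
/- Proximal operator of the group MCP penalty: Fix μ > 0 and γ > 1, and let ρ(t; μ, γ) = μ∫_0^t (1 − x/(μγ))_+ dx for t ≥ 0 be the minimax concave penalty. For any u ∈ R^R, define S_{μ,γ}(u) = (1 − μ/‖u‖₂)_+ u / (1 − 1/γ) if ‖u‖₂ < μγ, and S_{μ,γ}(u) = u if ‖u‖₂ ≥ μγ. Then S_{μ,γ}(u) is a global minimizer over v ∈ R^R of the function v ↦ (1/2)‖v − u‖₂² + ρ(‖v‖₂; μ, γ). -/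
/-- The minimax concave penalty (MCP): `ρ(t; μ, γ) = μ ∫_0^t (1 - x/(μγ))₊ dx`. -/
noncomputable def mcp (μ γ : ℝ) (t : ℝ) : ℝ :=
  μ * ∫ x in (0 : ℝ)..t, max (1 - x / (μ * γ)) 0

/-- The row-wise group soft-thresholding operator used in the Sparse STANE algorithm. -/
noncomputable def groupThresh {R : ℕ} (μ γ : ℝ) (u : EuclideanSpace ℝ (Fin R)) :
    EuclideanSpace ℝ (Fin R) :=
  if ‖u‖ < μ * γ then ((max (1 - μ / ‖u‖) 0) / (1 - 1 / γ)) • u else u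


lemma mcp_cont (μ γ : ℝ) : Continuous (fun x : ℝ => max (1 - x / (μ * γ)) 0) :=
  (continuous_const.sub (continuous_id.div_const _)).max continuous_const

lemma mcp_of_le (μ γ t : ℝ) (hμ : 0 < μ) (hγ : 0 < γ) (ht : 0 ≤ t) (h : t ≤ μ*γ) :
    mcp μ γ t = μ*t - t^2/(2*γ) := by
  have hμγ : 0 < μ * γ := mul_pos hμ hγ
  have hcongr : ∫ x in (0:ℝ)..t, max (1 - x / (μ * γ)) 0 = ∫ x in (0:ℝ)..t, (1 - x / (μ * γ)) := by
    apply intervalIntegral.integral_congr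
    intro x hx
    rw [Set.uIcc_of_le ht] at hx
    have hx0 : 0 ≤ x := hx.1
    have hx1 : x ≤ μ * γ := hx.2.trans h
    have : 0 ≤ 1 - x / (μ * γ) := by
      rw [sub_nonneg, div_le_one hμγ]; exact hx1
    simp [max_eq_left this]
  rw [mcp, hcongr]
  have hint : IntervalIntegrable (fun x : ℝ => x / (μ*γ)) MeasureTheory.volume 0 t :=
    (continuous_id.div_const _).intervalIntegrable _ _
  rw [intervalIntegral.integral_sub intervalIntegrable_const hint]
  simp [intervalIntegral.integral_div, integral_id]
  field_simp

lemma mcp_of_ge (μ γ t : ℝ) (hμ : 0 < μ) (hγ : 0 < γ) (h : μ*γ ≤ t) :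
    mcp μ γ t = μ^2*γ/2 := by
  have hμγ : 0 < μ * γ := mul_pos hμ hγ
  have hsplit : ∫ x in (0:ℝ)..t, max (1 - x / (μ * γ)) 0 =
      (∫ x in (0:ℝ)..(μ*γ), max (1 - x / (μ * γ)) 0) + ∫ x in (μ*γ)..t, max (1 - x / (μ * γ)) 0 :=
    (intervalIntegral.integral_add_adjacent_intervals
      ((mcp_cont μ γ).intervalIntegrable _ _) ((mcp_cont μ γ).intervalIntegrable _ _)).symm
  have hzero : ∫ x in (μ*γ)..t, max (1 - x / (μ * γ)) 0 = 0 := by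
    have : ∫ x in (μ*γ)..t, max (1 - x / (μ * γ)) 0 = ∫ x in (μ*γ)..t, (0:ℝ) := by
      apply intervalIntegral.integral_congr
      intro x hx
      rw [Set.uIcc_of_le h] at hx
      have : 1 - x / (μ * γ) ≤ 0 := by
        rw [sub_nonpos, le_div_iff₀ hμγ, one_mul]; exact hx.1
      simp [max_eq_right this]
    simp [this]
  have h1 : mcp μ γ (μ*γ) = μ*(μ*γ) - (μ*γ)^2/(2*γ) := mcp_of_le μ γ (μ*γ) hμ hγ hμγ.le le_rfl
  have : mcp μ γ t = mcp μ γ (μ*γ) := by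
    rw [mcp, mcp, hsplit, hzero, add_zero]
  rw [this, h1]
  field_simp
  ring

lemma mcp_zero (μ γ : ℝ) : mcp μ γ 0 = 0 := by simp [mcp]

lemma key (μ γ a t : ℝ) (hμ : 0 < μ) (hγ : 1 < γ) (ha : 0 ≤ a) (ht : 0 ≤ t)
    (s : ℝ) (hs : s = if a < μ*γ then max (a-μ) 0 / (1 - 1/γ) else a) :
    (1/2)*(s-a)^2 + mcp μ γ s ≤ (1/2)*(t-a)^2 + mcp μ γ t := by
  have hγ0 : 0 < γ := lt_trans one_pos hγ
  have hγ1 : 0 < γ - 1 := by linarith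
  have h1γ : 0 < 1 - 1/γ := by
    rw [sub_pos, div_lt_one hγ0]; exact hγ
  have hμγ : 0 < μ * γ := mul_pos hμ hγ0
  by_cases hcase : a < μ * γ
  · rw [if_pos hcase] at hs
    by_cases haμ : a ≤ μ
    · -- s = 0
      have hs0 : s = 0 := by rw [hs, max_eq_right (by linarith), zero_div]
      rw [hs0, mcp_zero]
      by_cases htc : t ≤ μ * γ
      · rw [mcp_of_le μ γ t hμ hγ0 ht htc]
        have hdiv : t^2/(2*γ) ≤ t^2/2 :=
          div_le_div_of_nonneg_left (sq_nonneg t) two_pos (by linarith)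
        nlinarith [hdiv, mul_nonneg ht (sub_nonneg.2 haμ)]
      · push_neg at htc
        rw [mcp_of_ge μ γ t hμ hγ0 htc.le]
        nlinarith [sq_nonneg (t - a), sq_nonneg (μ*γ - a), mul_pos hμ hγ0]
    · push_neg at haμ
      have hsval : s * (1 - 1/γ) = a - μ := by
        rw [hs, max_eq_left (by linarith), div_mul_cancel₀ _ (ne_of_gt h1γ)]
      have hs' : s * (γ - 1) = γ * (a - μ) := by
        have := hsval
        field_simp at this
        nlinarith [this]
      have hs_nonneg : 0 ≤ s := by
        rw [hs]; exact div_nonneg (le_max_right _ _) h1γ.le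
      have hs_le : s ≤ μ * γ := by
        nlinarith [hs']
      rw [mcp_of_le μ γ s hμ hγ0 hs_nonneg hs_le]
      by_cases htc : t ≤ μ * γ
      · rw [mcp_of_le μ γ t hμ hγ0 ht htc]
        rw [← sub_nonneg]
        have key : 0 ≤ ((γ-1)*t - γ*(a-μ))^2 := sq_nonneg _
        have expand : (1/2)*(t-a)^2 + (μ*t - t^2/(2*γ)) - ((1/2)*(s-a)^2 + (μ*s - s^2/(2*γ)))
            = ((γ-1)*t - γ*(a-μ))^2 / (2*γ*(γ-1)) - ((γ-1)*s - γ*(a-μ))^2 / (2*γ*(γ-1)) := by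
          field_simp
          ring
        rw [expand]
        have : (γ-1)*s - γ*(a-μ) = 0 := by linarith [hs']
        rw [show (γ-1)*s = s*(γ-1) by ring] at this ⊢
        rw [hs'] at this ⊢
        simp
        positivity
      · push_neg at htc
        rw [mcp_of_ge μ γ t hμ hγ0 htc.le]
        -- g(t) ≥ g(μγ) ≥ g(s)
        have h1 : (1/2)*(μ*γ-a)^2 ≤ (1/2)*(t-a)^2 := by nlinarith
        have h2 : (1/2)*(s-a)^2 + (μ*s - s^2/(2*γ)) ≤ (1/2)*(μ*γ-a)^2 + (μ*(μ*γ) - (μ*γ)^2/(2*γ)) := by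
          rw [← sub_nonneg]
          have expand : (1/2)*(μ*γ-a)^2 + (μ*(μ*γ) - (μ*γ)^2/(2*γ)) - ((1/2)*(s-a)^2 + (μ*s - s^2/(2*γ)))
              = ((γ-1)*(μ*γ) - γ*(a-μ))^2 / (2*γ*(γ-1)) - ((γ-1)*s - γ*(a-μ))^2 / (2*γ*(γ-1)) := by
            field_simp
            ring
          rw [expand, show (γ-1)*s = s*(γ-1) by ring, hs']
          simp
          positivity
        have h3 : μ*(μ*γ) - (μ*γ)^2/(2*γ) = μ^2*γ/2 := by field_simp; ring
        linarith [h2, h1, h3.le]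
  · rw [if_neg hcase] at hs
    push_neg at hcase
    rw [hs, mcp_of_ge μ γ a hμ hγ0 hcase]
    simp only [sub_self]
    by_cases htc : t ≤ μ * γ
    · rw [mcp_of_le μ γ t hμ hγ0 ht htc]
      rw [← sub_nonneg]
      have h1 : (μ*γ - t)^2 ≤ (a - t)^2 := by nlinarith
      have expand : (1/2)*(t-a)^2 + (μ*t - t^2/(2*γ)) - ((1/2)*(0:ℝ)^2 + μ^2*γ/2)
          = (1/2)*((t-a)^2 - (μ*γ-t)^2) + ((γ-1)*(t - μ*γ))^2/(2*γ*(γ-1)) := by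
        field_simp
        ring
      rw [expand]
      have h2 : 0 ≤ ((γ-1)*(t - μ*γ))^2/(2*γ*(γ-1)) := by positivity
      have h4 : (t-a)^2 = (a-t)^2 := by ring
      linarith [h1, h2, h4]
    · push_neg at htc
      rw [mcp_of_ge μ γ t hμ hγ0 htc.le]
      nlinarith [sq_nonneg (t-a)]


/-- **Proximal operator of the group MCP penalty.**
For `μ > 0`, `γ > 1`, the thresholding operator `S_{μ,γ}(u)` is a global minimizer of
`v ↦ (1/2)‖v − u‖₂² + ρ(‖v‖₂; μ, γ)`. -/
theorem groupThresh_is_prox_mcp {R : ℕ} (μ γ : ℝ) (hμ : 0 < μ) (hγ : 1 < γ)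
    (u : EuclideanSpace ℝ (Fin R)) :
    ∀ v : EuclideanSpace ℝ (Fin R),
      (1 / 2) * ‖groupThresh μ γ u - u‖ ^ 2 + mcp μ γ ‖groupThresh μ γ u‖ ≤
        (1 / 2) * ‖v - u‖ ^ 2 + mcp μ γ ‖v‖ := by
  intro v
  have hγ0 : 0 < γ := lt_trans one_pos hγ
  have h1γ : 0 < 1 - 1/γ := by rw [sub_pos, div_lt_one hγ0]; exact hγ
  set a : ℝ := ‖u‖ with ha_def
  have ha : 0 ≤ a := norm_nonneg u
  set t : ℝ := ‖v‖ with ht_def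
  have ht : 0 ≤ t := norm_nonneg v
  set s : ℝ := if a < μ*γ then max (a-μ) 0 / (1 - 1/γ) else a with hs_def
  -- LHS equals (1/2)*(s-a)^2 + mcp μ γ s
  have hLHS : (1 / 2) * ‖groupThresh μ γ u - u‖ ^ 2 + mcp μ γ ‖groupThresh μ γ u‖
      = (1/2)*(s-a)^2 + mcp μ γ s := by
    by_cases hc : a < μ * γ
    · have hgt : groupThresh μ γ u = ((max (1 - μ / a) 0) / (1 - 1 / γ)) • u := by
        rw [groupThresh, if_pos (by rw [← ha_def]; exact hc)]
      set c : ℝ := (max (1 - μ / a) 0) / (1 - 1 / γ) with hc_def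
      have hc0 : 0 ≤ c := div_nonneg (le_max_right _ _) h1γ.le
      have hnorm : ‖groupThresh μ γ u‖ = c * a := by
        rw [hgt, norm_smul, Real.norm_eq_abs, abs_of_nonneg hc0]
      have hsub : ‖groupThresh μ γ u - u‖ = |c - 1| * a := by
        rw [hgt, show c • u - u = (c - 1) • u by rw [sub_smul, one_smul],
          norm_smul, Real.norm_eq_abs]
      have hsa : c * a = s := by
        rw [hs_def, if_pos hc, hc_def]
        rcases eq_or_lt_of_le ha with h0 | h0
        · rw [← h0, mul_zero, show (0:ℝ) - μ = -μ by ring,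
            max_eq_right (by linarith : -μ ≤ (0:ℝ)), zero_div]
        · have hane : a ≠ 0 := ne_of_gt h0
          rw [div_mul_eq_mul_div, max_mul_of_nonneg _ _ h0.le, zero_mul]
          congr 2
          field_simp
      rw [hnorm, hsub, hsa]
      congr 1
      rw [mul_pow, sq_abs]
      have : (c-1)^2 * a^2 = (c*a - a)^2 := by ring
      rw [this, hsa]
    · have hgt : groupThresh μ γ u = u := by
        rw [groupThresh, if_neg (by rw [← ha_def]; exact hc)]
      rw [hs_def, if_neg hc, hgt]
      simp
      rfl
  -- RHS bound
  have hRHS : (1/2)*(t-a)^2 + mcp μ γ t ≤ (1 / 2) * ‖v - u‖ ^ 2 + mcp μ γ t := by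
    have hinner : inner ℝ v u ≤ t * a := real_inner_le_norm v u
    have hns : ‖v - u‖^2 = t^2 - 2 * inner ℝ v u + a^2 := by
      rw [ht_def, ha_def]; exact norm_sub_sq_real v u
    nlinarith [hinner, hns]
  calc (1 / 2) * ‖groupThresh μ γ u - u‖ ^ 2 + mcp μ γ ‖groupThresh μ γ u‖
      = (1/2)*(s-a)^2 + mcp μ γ s := hLHS
    _ ≤ (1/2)*(t-a)^2 + mcp μ γ t := key μ γ a t hμ hγ ha ht s hs_def
    _ ≤ (1 / 2) * ‖v - u‖ ^ 2 + mcp μ γ t := hRHS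
end

section
/- Gradient of the negative log-likelihood with respect to the temporal weights: Fix a symmetric matrix A ∈ R^{N×N}, a symmetric matrix S ∈ R^{N×N}, and a matrix U ∈ R^{N×R_D}, and define f : R^{R_D} → R by f(v) = −Σ_{i=1}^N Σ_{j=1}^N [A_ij Θ_ij(v) − log(1 + exp(Θ_ij(v)))] with Θ(v) = S + U diag(v) Uᵀ, where diag(v) is the diagonal matrix with diagonal entries v_1,…,v_{R_D}. Then f is differentiable, and for each r = 1,…,R_D its partial derivative satisfies ∂f/∂v_r = −u_rᵀ (A − σ(Θ(v))) u_r, where u_r is the r-th column of U and σ(x) = 1/(1+e^{−x}) is applied entrywise; equivalently, the gradient of f at v is −diag[Uᵀ(A − σ(Θ(v)))U], the vector of diagonal entries of Uᵀ(A − σ(Θ(v)))U. -/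
open Matrix

/-- The logistic (sigmoid) function `σ(x) = 1/(1+e^{-x})`. -/
noncomputable def logistic (x : ℝ) : ℝ := 1 / (1 + Real.exp (-x))

/-- Entrywise application of the logistic function to a matrix. -/
noncomputable def logisticM {N : ℕ} (M : Matrix (Fin N) (Fin N) ℝ) :
    Matrix (Fin N) (Fin N) ℝ :=
  Matrix.of fun i j => logistic (M i j)

lemma logistic_eq (x : ℝ) : logistic x = Real.exp x / (1 + Real.exp x) := by
  unfold logistic
  rw [Real.exp_neg]
  have h : Real.exp x ≠ 0 := (Real.exp_pos x).ne'
  have h2 : (1 : ℝ) + Real.exp x ≠ 0 := by positivity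
  field_simp
  ring

/-- **Gradient of the negative log-likelihood with respect to the temporal weights.**
With `Θ(v) = S + U diag(v) Uᵀ` and
`f(v) = −Σ_{i,j} [A_ij Θ_ij(v) − log(1 + exp(Θ_ij(v)))]`, the function `f` is
differentiable at every `v`, with `∂f/∂v_r = −u_rᵀ (A − σ(Θ(v))) u_r`, i.e. its gradient
is `−diag[Uᵀ(A − σ(Θ(v)))U]`. -/
theorem gradient_temporal_weights
    (N RD : ℕ)
    (A S : Matrix (Fin N) (Fin N) ℝ) (hA : A.IsSymm) (hS : S.IsSymm)
    (U : Matrix (Fin N) (Fin RD) ℝ)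
    (f : (Fin RD → ℝ) → ℝ)
    (hf : ∀ v : Fin RD → ℝ,
      f v = -∑ i, ∑ j,
        (A i j * (S + U * Matrix.diagonal v * Uᵀ) i j -
          Real.log (1 + Real.exp ((S + U * Matrix.diagonal v * Uᵀ) i j))))
    (v : Fin RD → ℝ) :
    ∃ φ : (Fin RD → ℝ) →L[ℝ] ℝ, HasFDerivAt f φ v ∧
      ∀ w : Fin RD → ℝ, φ w =
        ∑ r, (-(∑ i, ∑ j,
          U i r * ((A - logisticM (S + U * Matrix.diagonal v * Uᵀ)) i j) * U j r)) * w r := by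
  classical
  -- entrywise formula for Θ
  have hentry : ∀ (u : Fin RD → ℝ) (i j : Fin N),
      (S + U * Matrix.diagonal u * Uᵀ) i j = S i j + ∑ r, (U i r * U j r) * u r := by
    intro u i j
    rw [Matrix.add_apply, Matrix.mul_apply]
    simp only [Matrix.mul_diagonal, Matrix.transpose_apply]
    congr 1
    apply Finset.sum_congr rfl
    intro r _
    ring
  -- linear part
  set L : Fin N → Fin N → ((Fin RD → ℝ) →L[ℝ] ℝ) :=
    fun i j => ∑ r, (U i r * U j r) • ContinuousLinearMap.proj r with hLdef
  have hLapp : ∀ (i j : Fin N) (w : Fin RD → ℝ),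
      L i j w = ∑ r, (U i r * U j r) * w r := by
    intro i j w
    simp [hLdef, ContinuousLinearMap.sum_apply, ContinuousLinearMap.proj_apply]
  have hΘderiv : ∀ i j : Fin N,
      HasFDerivAt (fun u => (S + U * Matrix.diagonal u * Uᵀ) i j) (L i j) v := by
    intro i j
    have h1 : HasFDerivAt (fun u => S i j + (L i j) u) (L i j) v :=
      ((L i j).hasFDerivAt).const_add _
    have heq : (fun u => (S + U * Matrix.diagonal u * Uᵀ) i j)
        = fun u => S i j + (L i j) u := by
      funext u
      rw [hentry u i j, hLapp]
    rw [heq]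
    exact h1
  -- scalar derivative
  set c : Fin N → Fin N → ℝ := fun i j =>
    A i j - Real.exp ((S + U * Matrix.diagonal v * Uᵀ) i j) /
      (1 + Real.exp ((S + U * Matrix.diagonal v * Uᵀ) i j)) with hcdef
  have hij : ∀ i j : Fin N,
      HasFDerivAt (fun u => A i j * (S + U * Matrix.diagonal u * Uᵀ) i j -
          Real.log (1 + Real.exp ((S + U * Matrix.diagonal u * Uᵀ) i j)))
        (c i j • L i j) v := by
    intro i j
    set θ := (S + U * Matrix.diagonal v * Uᵀ) i j with hθ
    have h1 : HasDerivAt (fun x : ℝ => A i j * x) (A i j) θ := by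
      simpa using (hasDerivAt_id θ).const_mul (A i j)
    have h2 : HasDerivAt (fun x : ℝ => 1 + Real.exp x) (Real.exp θ) θ :=
      (Real.hasDerivAt_exp θ).const_add 1
    have hne : (1 : ℝ) + Real.exp θ ≠ 0 := by positivity
    have h3 : HasDerivAt (fun x : ℝ => Real.log (1 + Real.exp x))
        (Real.exp θ / (1 + Real.exp θ)) θ := h2.log hne
    have h4 : HasDerivAt (fun x : ℝ => A i j * x - Real.log (1 + Real.exp x)) (c i j) θ :=
      h1.sub h3
    exact h4.comp_hasFDerivAt v (hΘderiv i j)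
  have hsum : HasFDerivAt (fun u => ∑ i, ∑ j,
      (A i j * (S + U * Matrix.diagonal u * Uᵀ) i j -
        Real.log (1 + Real.exp ((S + U * Matrix.diagonal u * Uᵀ) i j))))
      (∑ i, ∑ j, c i j • L i j) v :=
    HasFDerivAt.fun_sum fun i _ => HasFDerivAt.fun_sum fun j _ => hij i j
  have hfeq : f = fun u => -∑ i, ∑ j,
      (A i j * (S + U * Matrix.diagonal u * Uᵀ) i j -
        Real.log (1 + Real.exp ((S + U * Matrix.diagonal u * Uᵀ) i j))) :=
    funext hf
  refine ⟨-(∑ i, ∑ j, c i j • L i j), by rw [hfeq]; exact hsum.neg, ?_⟩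
  intro w
  have hc' : ∀ i j, c i j = (A - logisticM (S + U * Matrix.diagonal v * Uᵀ)) i j := by
    intro i j
    simp [hcdef, logisticM, Matrix.sub_apply, logistic_eq]
  have lhs : (-(∑ i, ∑ j, c i j • L i j) : (Fin RD → ℝ) →L[ℝ] ℝ) w
      = -∑ i, ∑ j, c i j * ∑ r, (U i r * U j r) * w r := by
    simp [ContinuousLinearMap.sum_apply, hLapp]
  rw [lhs]
  have : ∀ i j : Fin N, c i j * ∑ r, (U i r * U j r) * w r
      = ∑ r, (U i r * c i j * U j r) * w r := by
    intro i j
    rw [Finset.mul_sum]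
    apply Finset.sum_congr rfl
    intro r _
    ring
  simp only [this]
  have key : (∑ i : Fin N, ∑ j : Fin N, ∑ r : Fin RD, (U i r * c i j * U j r) * w r)
      = ∑ r : Fin RD, ∑ i : Fin N, ∑ j : Fin N, (U i r * c i j * U j r) * w r := by
    have h1 : ∀ i ∈ (Finset.univ : Finset (Fin N)),
        (∑ j : Fin N, ∑ r : Fin RD, (U i r * c i j * U j r) * w r)
          = ∑ r : Fin RD, ∑ j : Fin N, (U i r * c i j * U j r) * w r :=
      fun i _ => Finset.sum_comm
    rw [Finset.sum_congr rfl h1, Finset.sum_comm]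
  simp only [← hc']
  rw [key, ← Finset.sum_neg_distrib]
  apply Finset.sum_congr rfl
  intro r _
  rw [neg_mul]
  congr 1
  rw [Finset.sum_mul]
  exact Finset.sum_congr rfl fun i _ => (Finset.sum_mul _ _ _).symm
end
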